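/- arXiv:1807.01744 — 4 statements merged into one kernel-verified Lean document; each statement's English description precedes it below -/
import Mathlib

section
/- Let L/K be a finite Galois extension of number fields with Galois group G, let C be a conjugacy class of G, and let f be the indicator function of the set S(L/K;C) on nonzero ideals of O_K. Then for every nonzero ideal I of O_K, ∑_{J ⊇ I} μ_K(J)·f(J) = −Q_C(I), where the sum runs over all ideals J of O_K dividing I (i.e., containing I). -/
open NumberField Ideal Filter
open scoped Classical

variable (K : Type) [Field K] [NumberField K]

/-- The Möbius function on ideals of the ring of integers of `K`:
`μ(O_K) = 1`, `μ(I) = (-1)^r` if `I` is a product of `r` distinct primes, `μ(I) = 0`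
if `I` is divisible by the square of a prime. -/
noncomputable def muK (I : Ideal (𝓞 K)) : ℤ :=
  if Squarefree I then (-1) ^ (UniqueFactorizationMonoid.factors I).card else 0

/-- `M(I)`: the maximal norm of a prime divisor of `I` (with `M(O_K) = 1`). -/
noncomputable def maxNorm (I : Ideal (𝓞 K)) : ℕ :=
  if I = ⊤ then 1
  else sSup ((fun p => Ideal.absNorm p) '' {p : Ideal (𝓞 K) | p.IsPrime ∧ p ∣ I})

variable (L : Type) [Field L] [NumberField L] [Algebra K L] [FiniteDimensional K L]
  [IsGalois K L]

/-- The prime ideal `p` of `O_K` is unramified in `L`. -/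
def UnramifiedIn (p : Ideal (𝓞 K)) : Prop :=
  ∀ P : Ideal (𝓞 L), P.IsPrime → P.comap (algebraMap (𝓞 K) (𝓞 L)) = p →
    Ideal.ramificationIdx' (S := 𝓞 L) p P = 1

/-- `σ ∈ Gal(L/K)` is the Frobenius element attached to some prime `P` of `O_L`
above `p`, i.e. `σ x ≡ x ^ N(p) (mod P)` for all `x ∈ O_L`. -/
def IsFrobenius (σ : L ≃ₐ[K] L) (p : Ideal (𝓞 K)) : Prop :=
  ∃ P : Ideal (𝓞 L), P.IsPrime ∧ P ≠ ⊥ ∧ P.comap (algebraMap (𝓞 K) (𝓞 L)) = p ∧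
    ∀ x : 𝓞 L, galRestrict (𝓞 K) K L (𝓞 L) σ x - x ^ Ideal.absNorm p ∈ P

/-- The Artin symbol `[L/K, p]`, i.e. the set of Frobenius elements attached to the
primes of `O_L` above `p`, equals the conjugacy class `C`. -/
def ArtinSymbolEq (p : Ideal (𝓞 K)) (C : ConjClasses (L ≃ₐ[K] L)) : Prop :=
  {σ : L ≃ₐ[K] L | IsFrobenius K L σ p} = C.carrier

/-- `Q_C(I)`: the number of prime divisors `p` of `I` of maximal norm that are
unramified in `L` and have Artin symbol `[L/K, p] = C`. -/
noncomputable def QC (C : ConjClasses (L ≃ₐ[K] L)) (I : Ideal (𝓞 K)) : ℕ :=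
  Nat.card {p : Ideal (𝓞 K) // p.IsPrime ∧ p ∣ I ∧ Ideal.absNorm p = maxNorm K I ∧
    UnramifiedIn K L p ∧ ArtinSymbolEq K L p C}

/-- `I ∈ S(L/K; C)`: `I` is a salient ideal (it has a unique prime divisor of minimal
norm `p = p_min(I)`), `p` is unramified in `L`, and `[L/K, p] = C`. -/
def MemS (C : ConjClasses (L ≃ₐ[K] L)) (I : Ideal (𝓞 K)) : Prop :=
  ∃ p : Ideal (𝓞 K), p.IsPrime ∧ p ∣ I ∧
    (∀ q : Ideal (𝓞 K), q.IsPrime → q ∣ I → q ≠ p →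
      Ideal.absNorm p < Ideal.absNorm q) ∧
    UnramifiedIn K L p ∧ ArtinSymbolEq K L p C

section Aux
open UniqueFactorizationMonoid
set_option linter.unusedSectionVars false

lemma dually_prime_of_dvd {I p : Ideal (𝓞 K)} (hI : I ≠ 0) (hp : p.IsPrime) (hpd : p ∣ I) :
    Prime p := by
  have hb : p ≠ ⊥ := by
    rintro rfl
    exact hI (zero_dvd_iff.mp hpd)
  exact (Ideal.prime_iff_isPrime hb).mpr hp

lemma dually_nf_prod {T : Finset (Ideal (𝓞 K))} (hT : ∀ p ∈ T, Prime p) :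
    normalizedFactors (∏ p ∈ T, p) = T.val := by
  rw [Finset.prod_eq_multiset_prod, Multiset.map_id']
  exact normalizedFactors_prod_of_prime hT

lemma dually_prod_ne_zero {T : Finset (Ideal (𝓞 K))} (hT : ∀ p ∈ T, Prime p) :
    (∏ p ∈ T, p) ≠ 0 :=
  Finset.prod_ne_zero_iff.mpr fun p hp => (hT p hp).ne_zero

lemma dually_sqfree_prod {T : Finset (Ideal (𝓞 K))} (hT : ∀ p ∈ T, Prime p) :
    Squarefree (∏ p ∈ T, p) := by
  rw [squarefree_iff_nodup_normalizedFactors (dually_prod_ne_zero K hT), dually_nf_prod K hT]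
  exact T.nodup

lemma dually_muK_prod {T : Finset (Ideal (𝓞 K))} (hT : ∀ p ∈ T, Prime p) :
    muK K (∏ p ∈ T, p) = (-1) ^ T.card := by
  rw [muK, if_pos (dually_sqfree_prod K hT), factors_eq_normalizedFactors,
    dually_nf_prod K hT]
  rfl

lemma dually_dvd_prod_iff {T : Finset (Ideal (𝓞 K))} (hT : ∀ p ∈ T, Prime p)
    {q : Ideal (𝓞 K)} (hq : q.IsPrime) : q ∣ (∏ p ∈ T, p) ↔ q ∈ T := by
  constructor
  · intro hqd
    have hqp : Prime q := dually_prime_of_dvd K (dually_prod_ne_zero K hT) hq hqd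
    obtain ⟨p, hp, hqp'⟩ := (hqp.dvd_finset_prod_iff _).mp hqd
    rwa [associated_iff_eq.mp (hqp.associated_of_dvd (hT p hp) hqp')]
  · exact fun h => Finset.dvd_prod_of_mem _ h

lemma dually_memS_prod (C : ConjClasses (L ≃ₐ[K] L)) {T : Finset (Ideal (𝓞 K))}
    (hT : ∀ p ∈ T, Prime p) :
    MemS K L C (∏ p ∈ T, p) ↔
      ∃ p ∈ T, (∀ q ∈ T, q ≠ p → Ideal.absNorm p < Ideal.absNorm q) ∧
        UnramifiedIn K L p ∧ ArtinSymbolEq K L p C := by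
  constructor
  · rintro ⟨p, hp, hpd, hmin, hU, hA⟩
    refine ⟨p, (dually_dvd_prod_iff K hT hp).mp hpd, fun q hq hqp => ?_, hU, hA⟩
    exact hmin q (Ideal.isPrime_of_prime (hT q hq)) (Finset.dvd_prod_of_mem _ hq) hqp
  · rintro ⟨p, hp, hmin, hU, hA⟩
    refine ⟨p, (Ideal.isPrime_of_prime (hT p hp)), Finset.dvd_prod_of_mem _ hp,
      fun q hq hqd hqp => ?_, hU, hA⟩
    exact hmin q ((dually_dvd_prod_iff K hT hq).mp hqd) hqp

lemma dually_divisors_finite {I : Ideal (𝓞 K)} (hI : I ≠ 0) :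
    {J : Ideal (𝓞 K) | J ∣ I}.Finite := by
  haveI : Fintype {J : Ideal (𝓞 K) // J ∣ I} :=
    UniqueFactorizationMonoid.fintypeSubtypeDvd I hI
  have : Finite ↑{J : Ideal (𝓞 K) | J ∣ I} :=
    Finite.of_equiv {J : Ideal (𝓞 K) // J ∣ I} (Equiv.refl _)
  exact Set.toFinite _

lemma dually_maxNorm_iff {I p : Ideal (𝓞 K)} (hI : I ≠ 0) (hItop : I ≠ ⊤)
    (hp : p.IsPrime) (hpd : p ∣ I) :
    Ideal.absNorm p = maxNorm K I ↔
      ∀ q : Ideal (𝓞 K), q.IsPrime → q ∣ I → Ideal.absNorm q ≤ Ideal.absNorm p := by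
  have hfin : ((fun p => Ideal.absNorm p) '' {q : Ideal (𝓞 K) | q.IsPrime ∧ q ∣ I}).Finite :=
    Set.Finite.image _ ((dually_divisors_finite K hI).subset fun q hq => hq.2)
  have hmem : Ideal.absNorm p ∈
      (fun p => Ideal.absNorm p) '' {q : Ideal (𝓞 K) | q.IsPrime ∧ q ∣ I} :=
    ⟨p, ⟨hp, hpd⟩, rfl⟩
  rw [maxNorm, if_neg hItop]
  constructor
  · intro h q hq hqd
    rw [h]
    exact le_csSup hfin.bddAbove ⟨q, ⟨hq, hqd⟩, rfl⟩
  · intro h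
    refine le_antisymm (le_csSup hfin.bddAbove hmem) (csSup_le ⟨_, hmem⟩ ?_)
    rintro x ⟨q, ⟨hq, hqd⟩, rfl⟩
    exact h q hq hqd

lemma dually_QC_eq_card (C : ConjClasses (L ≃ₐ[K] L)) {I : Ideal (𝓞 K)} (hI : I ≠ 0) :
    QC K L C I =
      ((UniqueFactorizationMonoid.normalizedFactors I).toFinset.filter
        (fun p => (UnramifiedIn K L p ∧ ArtinSymbolEq K L p C) ∧
          ((UniqueFactorizationMonoid.normalizedFactors I).toFinset.filter
            (fun q => Ideal.absNorm p < Ideal.absNorm q)) = ∅)).card := by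
  have h1 : QC K L C I = ({p : Ideal (𝓞 K) | p.IsPrime ∧ p ∣ I ∧
      Ideal.absNorm p = maxNorm K I ∧ UnramifiedIn K L p ∧ ArtinSymbolEq K L p C}).ncard := by
    rw [← Nat.card_coe_set_eq]
    rfl
  rw [h1]
  by_cases hItop : I = ⊤
  · subst hItop
    have hnone : ∀ p : Ideal (𝓞 K), p.IsPrime → ¬ (p ∣ (⊤ : Ideal (𝓞 K))) := by
      intro p hp hpd
      have : IsUnit p := isUnit_of_dvd_unit hpd (Ideal.isUnit_iff.mpr rfl)
      exact hp.ne_top (Ideal.isUnit_iff.mp this)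
    have hs : {p : Ideal (𝓞 K) | p.IsPrime ∧ p ∣ (⊤ : Ideal (𝓞 K)) ∧
        Ideal.absNorm p = maxNorm K ⊤ ∧ UnramifiedIn K L p ∧ ArtinSymbolEq K L p C} = ∅ := by
      ext p
      simp only [Set.mem_setOf_eq, Set.mem_empty_iff_false, iff_false]
      rintro ⟨hp, hpd, -⟩
      exact hnone p hp hpd
    have hnf : UniqueFactorizationMonoid.normalizedFactors (⊤ : Ideal (𝓞 K)) = 0 := by
      rw [← Ideal.one_eq_top, UniqueFactorizationMonoid.normalizedFactors_one]
    rw [hs, hnf]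
    simp
  · have hset : {p : Ideal (𝓞 K) | p.IsPrime ∧ p ∣ I ∧
        Ideal.absNorm p = maxNorm K I ∧ UnramifiedIn K L p ∧ ArtinSymbolEq K L p C} =
        ↑((UniqueFactorizationMonoid.normalizedFactors I).toFinset.filter
          (fun p => (UnramifiedIn K L p ∧ ArtinSymbolEq K L p C) ∧
            ((UniqueFactorizationMonoid.normalizedFactors I).toFinset.filter
              (fun q => Ideal.absNorm p < Ideal.absNorm q)) = ∅)) := by
      ext p
      rw [Finset.mem_coe, Finset.mem_filter, Multiset.mem_toFinset,
        UniqueFactorizationMonoid.mem_normalizedFactors_iff hI, Finset.filter_eq_empty_iff]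
      simp only [Set.mem_setOf_eq]
      constructor
      · rintro ⟨hp, hpd, hmax, hU, hA⟩
        have hprime : Prime p := dually_prime_of_dvd K hI hp hpd
        refine ⟨⟨hprime, hpd⟩, ⟨hU, hA⟩, ?_⟩
        intro q hq
        rw [Multiset.mem_toFinset, UniqueFactorizationMonoid.mem_normalizedFactors_iff hI] at hq
        exact not_lt.mpr ((dually_maxNorm_iff K hI hItop hp hpd).mp hmax q
          (Ideal.isPrime_of_prime hq.1) hq.2)
      · rintro ⟨⟨hprime, hpd⟩, ⟨hU, hA⟩, hemp⟩
        have hp : p.IsPrime := Ideal.isPrime_of_prime hprime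
        refine ⟨hp, hpd, ?_, hU, hA⟩
        rw [dually_maxNorm_iff K hI hItop hp hpd]
        intro q hq hqd
        have hqprime : Prime q := dually_prime_of_dvd K hI hq hqd
        have := hemp (x := q) (by
          rw [Multiset.mem_toFinset, UniqueFactorizationMonoid.mem_normalizedFactors_iff hI]
          exact ⟨hqprime, hqd⟩)
        exact not_lt.mp this
    rw [hset, Set.ncard_coe_finset]

end Aux

theorem duality_indicator_S (C : ConjClasses (L ≃ₐ[K] L)) (I : Ideal (𝓞 K)) (hI : I ≠ 0) :
    (∑ᶠ J ∈ {J : Ideal (𝓞 K) | I ≤ J}, muK K J * (if MemS K L C J then 1 else 0)) =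
      -(QC K L C I : ℤ) := by
  classical
  have hsetJ : {J : Ideal (𝓞 K) | I ≤ J} = {J : Ideal (𝓞 K) | J ∣ I} := by
    ext J
    exact (Ideal.dvd_iff_le).symm
  have hfin : {J : Ideal (𝓞 K) | I ≤ J}.Finite := by
    rw [hsetJ]; exact dually_divisors_finite K hI
  rw [finsum_mem_eq_finite_toFinset_sum _ hfin]
  set F := (UniqueFactorizationMonoid.normalizedFactors I).toFinset with hF
  have hFprime : ∀ p ∈ F, Prime p := fun p hp =>
    UniqueFactorizationMonoid.prime_of_normalized_factor p (Multiset.mem_toFinset.mp hp)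
  have hmemF : ∀ p : Ideal (𝓞 K), p ∈ F ↔ Prime p ∧ p ∣ I := fun p => by
    rw [hF, Multiset.mem_toFinset, UniqueFactorizationMonoid.mem_normalizedFactors_iff hI]
  rw [← Finset.sum_filter_of_ne (p := fun J => Squarefree J) (fun J _ hne => by
    by_contra hns
    exact hne (by rw [muK, if_neg hns, zero_mul]))]
  have himg : hfin.toFinset.filter (fun J => Squarefree J)
      = F.powerset.image (fun T => ∏ p ∈ T, p) := by
    ext J
    rw [Finset.mem_filter, Set.Finite.mem_toFinset, Set.mem_setOf_eq, ← Ideal.dvd_iff_le]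
    constructor
    · rintro ⟨hJd, hsq⟩
      have hJ0 : J ≠ 0 := fun h => hI (zero_dvd_iff.mp (h ▸ hJd))
      refine Finset.mem_image.mpr
        ⟨(UniqueFactorizationMonoid.normalizedFactors J).toFinset, ?_, ?_⟩
      · rw [Finset.mem_powerset]
        intro q hq
        rw [Multiset.mem_toFinset] at hq
        rw [hF, Multiset.mem_toFinset]
        exact Multiset.mem_of_le
          ((UniqueFactorizationMonoid.dvd_iff_normalizedFactors_le_normalizedFactors
            hJ0 hI).mp hJd) hq
      · have hnd : (UniqueFactorizationMonoid.normalizedFactors J).Nodup :=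
          (UniqueFactorizationMonoid.squarefree_iff_nodup_normalizedFactors hJ0).mp hsq
        rw [Finset.prod_eq_multiset_prod, Multiset.map_id', Multiset.toFinset_val,
          Multiset.dedup_eq_self.mpr hnd]
        exact associated_iff_eq.mp (UniqueFactorizationMonoid.prod_normalizedFactors hJ0)
    · intro hJ
      obtain ⟨T, hTss, rfl⟩ := Finset.mem_image.mp hJ
      rw [Finset.mem_powerset] at hTss
      have hT : ∀ p ∈ T, Prime p := fun p hp => hFprime p (hTss hp)
      exact ⟨Finset.prod_primes_dvd I hT (fun p hp => ((hmemF p).mp (hTss hp)).2),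
        dually_sqfree_prod K hT⟩
  rw [himg]
  rw [Finset.sum_image (by
    intro T hT T' hT' heq
    rw [Finset.mem_coe, Finset.mem_powerset] at hT hT'
    have h1 := dually_nf_prod K (fun p hp => hFprime p (hT hp))
    have h2 := dually_nf_prod K (fun p hp => hFprime p (hT' hp))
    exact Finset.val_injective (by rw [← h1, ← h2]; exact congrArg _ heq))]
  set P : Ideal (𝓞 K) → Finset (Ideal (𝓞 K)) → Prop := fun p T =>
    (∀ q ∈ T, q ≠ p → Ideal.absNorm p < Ideal.absNorm q) ∧
      UnramifiedIn K L p ∧ ArtinSymbolEq K L p C with hP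
  have hterm : ∀ T ∈ F.powerset,
      muK K (∏ p ∈ T, p) * (if MemS K L C (∏ p ∈ T, p) then 1 else 0)
        = (-1 : ℤ) ^ T.card * (if (∃ p ∈ T, P p T) then 1 else 0) := by
    intro T hT
    rw [Finset.mem_powerset] at hT
    have hTp : ∀ p ∈ T, Prime p := fun p hp => hFprime p (hT hp)
    rw [dually_muK_prod K hTp]
    congr 1
    simp only [dually_memS_prod K L C hTp, hP]
  rw [Finset.sum_congr rfl hterm]
  rw [← Finset.sum_filter_of_ne (p := fun T => ∃ p ∈ T, P p T) (fun T _ hne => by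
    by_contra hnc
    exact hne (by rw [if_neg hnc, mul_zero]))]
  rw [Finset.sum_congr rfl (fun T hT => by
    rw [if_pos (Finset.mem_filter.mp hT).2, mul_one])]
  have huniq : ∀ (T : Finset (Ideal (𝓞 K))) (p p' : Ideal (𝓞 K)),
      p ∈ T → P p T → p' ∈ T → P p' T → p = p' := by
    intro T p p' hp hPp hp' hPp'
    by_contra hne
    exact lt_asymm (hPp.1 p' hp' (Ne.symm hne)) (hPp'.1 p hp hne)
  set minp : Finset (Ideal (𝓞 K)) → Ideal (𝓞 K) := fun T =>
    if h : ∃ p ∈ T, P p T then h.choose else ⊥ with hminp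
  have hminp_spec : ∀ T : Finset (Ideal (𝓞 K)), (∃ p ∈ T, P p T) →
      minp T ∈ T ∧ P (minp T) T := by
    intro T h
    simp only [hminp, dif_pos h]
    exact ⟨h.choose_spec.1, h.choose_spec.2⟩
  set Fgt : Ideal (𝓞 K) → Finset (Ideal (𝓞 K)) := fun p =>
    F.filter fun q => Ideal.absNorm p < Ideal.absNorm q with hFgt
  have hstep : (∑ T ∈ F.powerset.filter (fun T => ∃ p ∈ T, P p T), (-1 : ℤ) ^ T.card)
      = ∑ x ∈ (F.filter fun p => UnramifiedIn K L p ∧ ArtinSymbolEq K L p C).sigma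
          (fun p => (Fgt p).powerset), (-1 : ℤ) ^ (x.2.card + 1) := by
    refine Finset.sum_nbij' (fun T => ⟨minp T, T.erase (minp T)⟩)
      (fun x => insert x.1 x.2) ?_ ?_ ?_ ?_ ?_
    · intro T hT
      rw [Finset.mem_filter, Finset.mem_powerset] at hT
      obtain ⟨hTss, hcond⟩ := hT
      obtain ⟨hmem, hPmin⟩ := hminp_spec T hcond
      rw [Finset.mem_sigma, Finset.mem_filter, Finset.mem_powerset]
      refine ⟨⟨hTss hmem, hPmin.2⟩, ?_⟩
      intro q hq
      rw [Finset.mem_erase] at hq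
      rw [hFgt]
      rw [Finset.mem_filter]
      exact ⟨hTss hq.2, hPmin.1 q hq.2 hq.1⟩
    · rintro ⟨p, S⟩ hx
      rw [Finset.mem_sigma, Finset.mem_filter, Finset.mem_powerset] at hx
      obtain ⟨hp, hS⟩ := hx
      have hSF : ∀ q ∈ S, q ∈ F ∧ Ideal.absNorm p < Ideal.absNorm q := fun q hq => by
        have := hS hq
        rw [hFgt, Finset.mem_filter] at this
        exact this
      rw [Finset.mem_filter, Finset.mem_powerset]
      refine ⟨?_, p, Finset.mem_insert_self p S, ?_, hp.2⟩
      · intro q hq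
        rcases Finset.mem_insert.mp hq with rfl | hq
        · exact hp.1
        · exact (hSF q hq).1
      · intro q hq hqp
        rcases Finset.mem_insert.mp hq with rfl | hq
        · exact absurd rfl hqp
        · exact (hSF q hq).2
    · intro T hT
      exact Finset.insert_erase (hminp_spec T (Finset.mem_filter.mp hT).2).1
    · rintro ⟨p, S⟩ hx
      rw [Finset.mem_sigma, Finset.mem_filter, Finset.mem_powerset] at hx
      obtain ⟨hp, hS⟩ := hx
      have hpS : p ∉ S := fun h => by
        have := hS h
        rw [hFgt, Finset.mem_filter] at this
        exact lt_irrefl _ this.2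
      have hPp : P p (insert p S) := by
        refine ⟨?_, hp.2⟩
        intro q hq hqp
        rcases Finset.mem_insert.mp hq with rfl | hq
        · exact absurd rfl hqp
        · have := hS hq
          rw [hFgt, Finset.mem_filter] at this
          exact this.2
      have hcond : ∃ p' ∈ insert p S, P p' (insert p S) :=
        ⟨p, Finset.mem_insert_self p S, hPp⟩
      obtain ⟨hmem, hPmin⟩ := hminp_spec _ hcond
      have heq : minp (insert p S) = p :=
        huniq _ _ _ hmem hPmin (Finset.mem_insert_self p S) hPp
      simp only [heq, Finset.erase_insert hpS]
    · intro T hT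
      have hmem := (hminp_spec T (Finset.mem_filter.mp hT).2).1
      rw [Finset.card_erase_add_one hmem]
  rw [hstep, Finset.sum_sigma]
  have hinner : ∀ p ∈ F.filter (fun p => UnramifiedIn K L p ∧ ArtinSymbolEq K L p C),
      (∑ S ∈ (Fgt p).powerset, (-1 : ℤ) ^ (S.card + 1))
        = -(if Fgt p = ∅ then (1 : ℤ) else 0) := by
    intro p _
    simp only [pow_succ]
    rw [← Finset.sum_mul, Finset.sum_powerset_neg_one_pow_card]
    by_cases h : Fgt p = ∅ <;> simp [h]
  rw [Finset.sum_congr rfl hinner]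
  rw [Finset.sum_neg_distrib, Finset.sum_boole, Finset.filter_filter]
  rw [dually_QC_eq_card K L C (I := I) hI]
end

section
/- Let K be a number field and let P be any set of nonzero prime ideals of O_K. Let f be the indicator function of the set of salient ideals I of O_K with p_min(I) ∈ P. Then for every nonzero ideal I of O_K, ∑_{J ⊇ I} μ_K(J)·f(J) = −#{p prime dividing I : N(p) = M(I) and p ∈ P}, where the sum runs over all ideals J of O_K dividing I. -/
open NumberField Ideal Filter
open scoped Classical

variable (K : Type) [Field K] [NumberField K]

set_option maxHeartbeats 1000000 in
open UniqueFactorizationMonoid in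
theorem duality_indicator_general (P : Set (Ideal (𝓞 K)))
    (hP : ∀ p ∈ P, p.IsPrime ∧ p ≠ ⊥) (I : Ideal (𝓞 K)) (hI : I ≠ 0) :
    (∑ᶠ J ∈ {J : Ideal (𝓞 K) | I ≤ J},
        muK K J * (if (∃ p : Ideal (𝓞 K), p.IsPrime ∧ p ∣ J ∧
          (∀ q : Ideal (𝓞 K), q.IsPrime → q ∣ J → q ≠ p →
            Ideal.absNorm p < Ideal.absNorm q) ∧ p ∈ P) then 1 else 0)) =
      -(Nat.card {p : Ideal (𝓞 K) // p.IsPrime ∧ p ∣ I ∧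
          Ideal.absNorm p = maxNorm K I ∧ p ∈ P} : ℤ) := by
  classical
  set N : Ideal (𝓞 K) → ℕ := fun p => Ideal.absNorm p with hN
  set T : Finset (Ideal (𝓞 K)) := (normalizedFactors I).toFinset with hTdef
  have hTmem : ∀ p, p ∈ T ↔ p.IsPrime ∧ p ∣ I := by
    intro p
    rw [hTdef, Multiset.mem_toFinset, Ideal.mem_normalizedFactors_iff hI, Ideal.dvd_iff_le]
  have hTprime : ∀ p ∈ T, Prime p := by
    intro p hp
    obtain ⟨h1, h2⟩ := (hTmem p).1 hp
    refine (Ideal.prime_iff_isPrime ?_).2 h1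
    rintro rfl
    exact hI ((zero_dvd_iff).1 (by rwa [Ideal.zero_eq_bot]))
  have hT0 : ∀ p ∈ T, p ≠ 0 := fun p hp => (hTprime p hp).ne_zero
  -- basic facts about products of subsets of T
  have hNF : ∀ S : Finset (Ideal (𝓞 K)), S ⊆ T → normalizedFactors (∏ p ∈ S, p) = S.val := by
    intro S hS
    have : (∏ p ∈ S, p) = S.val.prod := by rw [Finset.prod_val]; rfl
    rw [this]
    exact normalizedFactors_prod_of_prime (fun p hp => hTprime p (hS hp))
  have hprodne : ∀ S : Finset (Ideal (𝓞 K)), S ⊆ T → (∏ p ∈ S, p) ≠ 0 :=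
    fun S hS => Finset.prod_ne_zero_iff.2 fun p hp => hT0 p (hS hp)
  have hsqf : ∀ S : Finset (Ideal (𝓞 K)), S ⊆ T → Squarefree (∏ p ∈ S, p) := by
    intro S hS
    rw [squarefree_iff_nodup_normalizedFactors (hprodne S hS), hNF S hS]
    exact S.nodup
  have hmu : ∀ S : Finset (Ideal (𝓞 K)), S ⊆ T → muK K (∏ p ∈ S, p) = (-1) ^ S.card := by
    intro S hS
    rw [muK, if_pos (hsqf S hS)]
    congr 1
    rw [factors_eq_normalizedFactors, hNF S hS]
    rfl
  have hdvdI : ∀ S : Finset (Ideal (𝓞 K)), S ⊆ T → (∏ p ∈ S, p) ∣ I := by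
    intro S hS
    rw [dvd_iff_normalizedFactors_le_normalizedFactors (hprodne S hS) hI, hNF S hS]
    refine (Multiset.le_iff_subset S.nodup).2 (fun p hp => ?_)
    have := hS hp
    rwa [hTdef, Multiset.mem_toFinset] at this
  have hmemdvd : ∀ S : Finset (Ideal (𝓞 K)), S ⊆ T → ∀ q : Ideal (𝓞 K), Prime q →
      (q ∣ ∏ p ∈ S, p ↔ q ∈ S) := by
    intro S hS q hq
    constructor
    · intro h
      have : q ∈ normalizedFactors (∏ p ∈ S, p) :=
        (UniqueFactorizationMonoid.mem_normalizedFactors_iff (hprodne S hS)).2 ⟨hq, h⟩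
      rwa [hNF S hS] at this
    · intro h; exact Finset.dvd_prod_of_mem _ h
  -- the finsum equals the sum over products of subsets of T
  set f : Ideal (𝓞 K) → ℤ := fun J =>
    muK K J * (if (∃ p : Ideal (𝓞 K), p.IsPrime ∧ p ∣ J ∧
          (∀ q : Ideal (𝓞 K), q.IsPrime → q ∣ J → q ≠ p →
            Ideal.absNorm p < Ideal.absNorm q) ∧ p ∈ P) then 1 else 0) with hf
  set D : Finset (Ideal (𝓞 K)) := T.powerset.image (fun S => ∏ p ∈ S, p) with hD
  have hstep1 : (∑ᶠ J ∈ {J : Ideal (𝓞 K) | I ≤ J}, f J) = ∑ J ∈ D, f J := by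
    refine finsum_mem_eq_sum_of_subset f ?_ ?_
    · rintro J ⟨hJ1, hJ2⟩
      have hsq : Squarefree J := by
        by_contra h
        apply hJ2
        simp only [hf, muK, if_neg h, zero_mul]
      have hJ0 : J ≠ 0 := hsq.ne_zero
      have hJI : J ∣ I := Ideal.dvd_iff_le.2 hJ1
      set S : Finset (Ideal (𝓞 K)) := (normalizedFactors J).toFinset with hS
      have hSval : S.val = normalizedFactors J := by
        rw [hS, Multiset.toFinset_val,
          Multiset.dedup_eq_self.2 ((squarefree_iff_nodup_normalizedFactors hJ0).1 hsq)]
      have hST : S ⊆ T := by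
        intro p hp
        rw [hS, Multiset.mem_toFinset] at hp
        rw [hTdef, Multiset.mem_toFinset]
        exact Multiset.mem_of_le
          ((dvd_iff_normalizedFactors_le_normalizedFactors hJ0 hI).1 hJI) hp
      have hprod : (∏ p ∈ S, p) = J := by
        have : (∏ p ∈ S, p) = S.val.prod := by rw [Finset.prod_val]; rfl
        rw [this, hSval]
        exact associated_iff_eq.mp (prod_normalizedFactors hJ0)
      simp only [hD, Finset.coe_image, Set.mem_image]
      exact ⟨S, by simpa using Finset.mem_powerset.2 hST, hprod⟩
    · intro J hJ
      simp only [hD, Finset.coe_image, Set.mem_image] at hJ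
      obtain ⟨S, hS, rfl⟩ := hJ
      simp only [Finset.mem_coe, Finset.mem_powerset] at hS
      exact Ideal.dvd_iff_le.1 (hdvdI S hS)
  have hinj : ∀ S₁ ∈ T.powerset, ∀ S₂ ∈ T.powerset,
      (∏ p ∈ S₁, p) = (∏ p ∈ S₂, p) → S₁ = S₂ := by
    intro S₁ h1 S₂ h2 h
    have e1 := hNF S₁ (Finset.mem_powerset.1 h1)
    rw [h, hNF S₂ (Finset.mem_powerset.1 h2)] at e1
    exact Finset.val_inj.1 e1.symm
  have hstep2 : ∑ J ∈ D, f J = ∑ S ∈ T.powerset, f (∏ p ∈ S, p) := by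
    rw [hD, Finset.sum_image hinj]
  -- rewrite the summand
  have hsummand : ∀ S ∈ T.powerset, f (∏ p ∈ S, p) =
      (-1 : ℤ) ^ S.card * (if (∃ p ∈ S, p ∈ P ∧ ∀ q ∈ S, q ≠ p → N p < N q) then 1 else 0) := by
    intro S hSmem
    have hS : S ⊆ T := Finset.mem_powerset.1 hSmem
    rw [hf]
    simp only
    rw [hmu S hS]
    congr 1
    apply if_congr _ rfl rfl
    constructor
    · rintro ⟨p, hp1, hp2, hp3, hp4⟩
      have hpbot : p ≠ ⊥ := by
        rintro rfl
        exact hprodne S hS (by rw [← Ideal.zero_eq_bot] at hp2; exact zero_dvd_iff.1 hp2)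
      have hpprime : Prime p := (Ideal.prime_iff_isPrime hpbot).2 hp1
      refine ⟨p, (hmemdvd S hS p hpprime).1 hp2, hp4, fun q hq hqp => ?_⟩
      exact hp3 q (Ideal.isPrime_of_prime (hTprime q (hS hq)))
        (Finset.dvd_prod_of_mem _ hq) hqp
    · rintro ⟨p, hp1, hp2, hp3⟩
      have hpprime : Prime p := hTprime p (hS hp1)
      refine ⟨p, Ideal.isPrime_of_prime hpprime, Finset.dvd_prod_of_mem _ hp1,
        fun q hq1 hq2 hq3 => ?_, hp2⟩
      have hqbot : q ≠ ⊥ := by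
        rintro rfl
        exact hprodne S hS (by rw [← Ideal.zero_eq_bot] at hq2; exact zero_dvd_iff.1 hq2)
      have hqprime : Prime q := (Ideal.prime_iff_isPrime hqbot).2 hq1
      exact hp3 q ((hmemdvd S hS q hqprime).1 hq2) hq3
  set pred : Ideal (𝓞 K) → Finset (Ideal (𝓞 K)) → Prop :=
    fun p S => p ∈ S ∧ p ∈ P ∧ ∀ q ∈ S, q ≠ p → N p < N q with hpred
  have hcount : ∀ S ∈ T.powerset,
      (if (∃ p ∈ S, p ∈ P ∧ ∀ q ∈ S, q ≠ p → N p < N q) then (1:ℤ) else 0) =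
      ∑ p ∈ T, (if pred p S then (1:ℤ) else 0) := by
    intro S hSm
    have hS : S ⊆ T := Finset.mem_powerset.1 hSm
    by_cases hc : ∃ p ∈ S, p ∈ P ∧ ∀ q ∈ S, q ≠ p → N p < N q
    · obtain ⟨p₀, hp₀S, hp₀P, hp₀m⟩ := hc
      rw [if_pos ⟨p₀, hp₀S, hp₀P, hp₀m⟩,
        Finset.sum_eq_single_of_mem p₀ (hS hp₀S)]
      · rw [if_pos ⟨hp₀S, hp₀P, hp₀m⟩]
      · intro q hq hqne
        rw [if_neg]
        rintro ⟨hq1, hq2, hq3⟩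
        exact absurd (hp₀m q hq1 hqne) (not_lt.2 (le_of_lt (hq3 p₀ hp₀S (Ne.symm hqne))))
    · rw [if_neg hc, eq_comm, Finset.sum_eq_zero]
      intro p hp
      rw [if_neg]
      rintro ⟨h1, h2, h3⟩
      exact hc ⟨p, h1, h2, h3⟩
  have hstep3 : ∑ S ∈ T.powerset, f (∏ p ∈ S, p) =
      ∑ p ∈ T, ∑ S ∈ T.powerset, (-1:ℤ)^S.card * (if pred p S then 1 else 0) := by
    rw [Finset.sum_comm]
    refine Finset.sum_congr rfl fun S hS => ?_
    rw [hsummand S hS, hcount S hS, Finset.mul_sum]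
  have hinner : ∀ p ∈ T,
      (∑ S ∈ T.powerset, (-1:ℤ)^S.card * (if pred p S then 1 else 0)) =
      -(if p ∈ P ∧ T.filter (fun q => N p < N q) = ∅ then 1 else 0) := by
    intro p hpT
    by_cases hpP : p ∈ P
    case neg =>
      rw [if_neg (by tauto), neg_zero]
      apply Finset.sum_eq_zero
      intro S hS
      rw [if_neg, mul_zero]
      rintro ⟨h1, h2, h3⟩
      exact hpP h2
    case pos =>
      set Tp := T.filter (fun q => N p < N q) with hTp
      have hpnot : p ∉ Tp := by simp [hTp]
      have h1 : (∑ S ∈ T.powerset, (-1:ℤ)^S.card * (if pred p S then 1 else 0)) =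
          ∑ S ∈ T.powerset.filter (fun S => pred p S), (-1:ℤ)^S.card := by
        rw [Finset.sum_filter]
        refine Finset.sum_congr rfl fun S hS => ?_
        by_cases h : pred p S <;> simp [h]
      have h2 : (∑ S ∈ T.powerset.filter (fun S => pred p S), (-1:ℤ)^S.card) =
          ∑ U ∈ Tp.powerset, (-1:ℤ)^(U.card + 1) := by
        refine Finset.sum_nbij' (fun S => S.erase p) (fun U => insert p U) ?_ ?_ ?_ ?_ ?_
        · intro S hS
          rw [Finset.mem_filter] at hS
          have hS1 : S ⊆ T := Finset.mem_powerset.1 hS.1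
          have hS4 := hS.2.2.2
          rw [Finset.mem_powerset]
          intro q hq
          rw [Finset.mem_erase] at hq
          rw [hTp, Finset.mem_filter]
          exact ⟨hS1 hq.2, hS4 q hq.2 hq.1⟩
        · intro U hU
          rw [Finset.mem_powerset] at hU
          rw [Finset.mem_filter, Finset.mem_powerset]
          refine ⟨Finset.insert_subset hpT (fun q hq => (Finset.mem_filter.1 (hU hq)).1),
            Finset.mem_insert_self _ _, hpP, ?_⟩
          intro q hq hqne
          rcases Finset.mem_insert.1 hq with h | h
          · exact absurd h hqne
          · exact (Finset.mem_filter.1 (hU h)).2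
        · intro S hS
          rw [Finset.mem_filter] at hS
          exact Finset.insert_erase hS.2.1
        · intro U hU
          rw [Finset.mem_powerset] at hU
          exact Finset.erase_insert (fun h => hpnot (hU h))
        · intro S hS
          rw [Finset.mem_filter] at hS
          rw [Finset.card_erase_of_mem hS.2.1,
            Nat.sub_add_cancel (Finset.card_pos.2 ⟨p, hS.2.1⟩)]
      have h3 : (∑ U ∈ Tp.powerset, (-1:ℤ)^(U.card + 1)) =
          -(if Tp = ∅ then 1 else 0) := by
        rw [← Finset.sum_powerset_neg_one_pow_card (x := Tp), ← Finset.sum_neg_distrib]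
        exact Finset.sum_congr rfl fun U _ => by ring
      rw [h1, h2, h3]
      simp [hpP]
  -- characterize the maximal-norm condition
  have hmaxchar : ∀ p ∈ T,
      ((T.filter (fun q => N p < N q)) = ∅ ↔ N p = maxNorm K I) := by
    intro p hpT
    have hpI := (hTmem p).1 hpT
    have hItop : I ≠ ⊤ := by
      rintro rfl
      exact hpI.1.ne_top (top_le_iff.1 (Ideal.dvd_iff_le.1 hpI.2))
    have hsetT : {q : Ideal (𝓞 K) | q.IsPrime ∧ q ∣ I} = ↑T := by
      ext q
      simp only [Set.mem_setOf_eq, Finset.mem_coe, hTmem]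
    have himg : ((fun p => Ideal.absNorm p) '' {q : Ideal (𝓞 K) | q.IsPrime ∧ q ∣ I}) =
        ↑(T.image N) := by
      rw [hsetT, Finset.coe_image]
    have hne : (T.image N).Nonempty := ⟨N p, Finset.mem_image_of_mem N hpT⟩
    have hmax : maxNorm K I = (T.image N).max' hne := by
      rw [maxNorm, if_neg hItop, himg, hne.csSup_eq_max']
    rw [hmax, Finset.filter_eq_empty_iff]
    constructor
    · intro h
      refine le_antisymm (Finset.le_max' _ _ (Finset.mem_image_of_mem N hpT)) ?_
      refine Finset.max'_le _ _ _ ?_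
      intro y hy
      obtain ⟨q, hq, rfl⟩ := Finset.mem_image.1 hy
      exact not_lt.1 (h hq)
    · intro h q hq
      rw [h]
      exact not_lt.2 (Finset.le_max' _ _ (Finset.mem_image_of_mem N hq))
  -- identify the right-hand side cardinality
  have hcard : (Nat.card {p : Ideal (𝓞 K) // p.IsPrime ∧ p ∣ I ∧
      Ideal.absNorm p = maxNorm K I ∧ p ∈ P}) =
      (T.filter (fun p => p ∈ P ∧ T.filter (fun q => N p < N q) = ∅)).card := by
    have hset : {p : Ideal (𝓞 K) | p.IsPrime ∧ p ∣ I ∧ Ideal.absNorm p = maxNorm K I ∧ p ∈ P} =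
        ↑(T.filter (fun p => p ∈ P ∧ T.filter (fun q => N p < N q) = ∅)) := by
      ext p
      simp only [Set.mem_setOf_eq, Finset.coe_filter, Set.mem_setOf_eq, hTmem]
      constructor
      · rintro ⟨h1, h2, h3, h4⟩
        have hpT : p ∈ T := (hTmem p).2 ⟨h1, h2⟩
        exact ⟨⟨h1, h2⟩, h4, (hmaxchar p hpT).2 h3⟩
      · rintro ⟨⟨h1, h2⟩, h3, h4⟩
        have hpT : p ∈ T := (hTmem p).2 ⟨h1, h2⟩
        exact ⟨h1, h2, (hmaxchar p hpT).1 h4, h3⟩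
    have : Nat.card {p : Ideal (𝓞 K) // p.IsPrime ∧ p ∣ I ∧
        Ideal.absNorm p = maxNorm K I ∧ p ∈ P} =
        Nat.card ↥{p : Ideal (𝓞 K) | p.IsPrime ∧ p ∣ I ∧
          Ideal.absNorm p = maxNorm K I ∧ p ∈ P} := rfl
    rw [this, Nat.card_coe_set_eq, hset, Set.ncard_coe_finset]
  -- put everything together
  rw [hstep1, hstep2, hstep3]
  have hsum : ∑ p ∈ T, (∑ S ∈ T.powerset, (-1:ℤ)^S.card * (if pred p S then 1 else 0)) =
      ∑ p ∈ T, -(if p ∈ P ∧ T.filter (fun q => N p < N q) = ∅ then (1:ℤ) else 0) :=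
    Finset.sum_congr rfl hinner
  rw [hsum, Finset.sum_neg_distrib, Finset.sum_boole, hcard]
end

section
/- Let ρ : [0,∞) → ℝ be the Dickman function, i.e., the continuous function with ρ(β) = 1 for 0 ≤ β ≤ 1 that is differentiable on (1,∞) and satisfies −β·ρ'(β) = ρ(β−1) for β > 1. Then ρ(β) ≤ 1/Γ(β+1) for all β ≥ 0, where Γ is the Gamma function. -/
open NumberField Ideal Filter
open scoped Classical

open MeasureTheory Set in
theorem dickman_le_one_div_gamma (ρ : ℝ → ℝ)
    (hcont : ContinuousOn ρ (Set.Ici (0:ℝ)))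
    (hinit : ∀ β ∈ Set.Icc (0:ℝ) 1, ρ β = 1)
    (hode : ∀ β > (1:ℝ), HasDerivAt ρ (-ρ (β - 1) / β) β) :
    ∀ β ≥ (0:ℝ), ρ β ≤ 1 / Real.Gamma (β + 1) := by
  have hca : ∀ x : ℝ, 0 < x → ContinuousAt ρ x := fun x hx =>
    hcont.continuousAt (Ici_mem_nhds hx)
  have hInt : ∀ a b : ℝ, 0 ≤ a → 0 ≤ b → IntervalIntegrable ρ volume a b := by
    intro a b ha hb
    refine (hcont.mono fun t ht => ?_).intervalIntegrable
    rcases le_total a b with h | h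
    · rw [uIcc_of_le h] at ht; exact le_trans ha ht.1
    · rw [uIcc_of_ge h] at ht; exact le_trans hb ht.1
  have hρ1 : ρ 1 = 1 := hinit 1 ⟨zero_le_one, le_rfl⟩
  set F : ℝ → ℝ := fun x => ∫ t in (0:ℝ)..x, ρ t with hFdef
  have hFderiv : ∀ x : ℝ, 0 < x → HasDerivAt F (ρ x) x := by
    intro x hx
    refine intervalIntegral.integral_hasDerivAt_right (hInt 0 x le_rfl hx.le) ?_ (hca x hx)
    exact ContinuousAt.stronglyMeasurableAtFilter isOpen_Ioi (fun y hy => hca y hy) x hx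
  have hsub : ∀ β : ℝ, 1 ≤ β → (∫ t in (β - 1)..β, ρ t) = F β - F (β - 1) := by
    intro β hβ
    rw [hFdef]
    rw [← intervalIntegral.integral_interval_sub_left (hInt 0 β le_rfl (by linarith))
      (hInt 0 (β - 1) le_rfl (by linarith))]
  have hF0 : F 0 = 0 := intervalIntegral.integral_same
  have hF1 : F 1 = 1 := by
    have heq : ∀ t ∈ uIcc (0:ℝ) 1, ρ t = 1 := by
      intro t ht; rw [uIcc_of_le zero_le_one] at ht; exact hinit t ht
    rw [show F 1 = ∫ t in (0:ℝ)..1, ρ t from rfl, intervalIntegral.integral_congr heq]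
    simp
  -- the key integral identity
  set φ : ℝ → ℝ := fun y => y * ρ y - (F y - F (y - 1)) with hφdef
  have hφderiv : ∀ x : ℝ, 1 < x → HasDerivAt φ 0 x := by
    intro x hx
    have hx0 : (0:ℝ) < x := by linarith
    have h1 : HasDerivAt (fun y : ℝ => y * ρ y) (1 * ρ x + x * (-ρ (x - 1) / x)) x :=
      (hasDerivAt_id x).mul (hode x hx)
    have h3 : HasDerivAt (fun y : ℝ => F (y - 1)) (ρ (x - 1) * 1) x :=
      by have := (hFderiv (x - 1) (by linarith)).comp x ((hasDerivAt_id x).sub_const 1); exact this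
    have h := h1.sub ((hFderiv x hx0).sub h3)
    refine h.congr_deriv ?_
    rw [mul_div_assoc', mul_div_cancel_left₀ _ hx0.ne']
    ring
  have hφ1 : φ 1 = 0 := by
    simp [hφdef, hρ1, hF0, hF1]
  have hφconst : ∀ b : ℝ, 1 < b → φ b = 0 := by
    intro b hb
    have hconst : ∀ x ∈ Ioc (1:ℝ) b, φ b = φ x := by
      intro x hx
      have := constant_of_has_deriv_right_zero
        (f := φ) (a := x) (b := b)
        (fun y hy => ((hφderiv y (lt_of_lt_of_le hx.1 hy.1)).continuousAt).continuousWithinAt)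
        (fun y hy => (hφderiv y (lt_of_lt_of_le hx.1 hy.1)).hasDerivWithinAt)
      exact this b ⟨hx.2, le_rfl⟩
    -- limit as x → 1⁺
    have hmul : Filter.Tendsto (fun y : ℝ => y * ρ y - F y) (nhdsWithin 1 (Ioi 1))
        (nhds (1 * ρ 1 - F 1)) := by
      have : ContinuousAt (fun y : ℝ => y * ρ y - F y) 1 :=
        (continuousAt_id.mul (hca 1 one_pos)).sub (hFderiv 1 one_pos).continuousAt
      exact this.continuousWithinAt.tendsto
    have hcontF : ContinuousOn F (Icc (0:ℝ) 1) := by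
      have hIcc : IntegrableOn ρ (Icc (0:ℝ) 1) volume :=
        (hcont.mono (fun t ht => ht.1)).integrableOn_Icc
      have := intervalIntegral.continuousOn_primitive_interval
        (f := ρ) (a := (0:ℝ)) (b := (1:ℝ)) (μ := volume)
        (by rwa [uIcc_of_le zero_le_one])
      rwa [uIcc_of_le zero_le_one] at this
    have h0 : ContinuousWithinAt F (Icc (0:ℝ) 1) 0 := hcontF 0 ⟨le_rfl, zero_le_one⟩
    have hsubmap : Filter.Tendsto (fun y : ℝ => y - 1) (nhdsWithin 1 (Ioi 1))
        (nhdsWithin 0 (Icc (0:ℝ) 1)) := by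
      have htd : Filter.Tendsto (fun y : ℝ => y - 1) (nhdsWithin 1 (Ioi 1)) (nhds 0) := by
        have := (continuous_sub_right (1:ℝ)).tendsto 1
        rw [sub_self] at this
        exact this.mono_left nhdsWithin_le_nhds
      refine tendsto_nhdsWithin_of_tendsto_nhds_of_eventually_within _ htd ?_
      have hmem : Ioc (1:ℝ) 2 ∈ nhdsWithin (1:ℝ) (Ioi 1) :=
        Ioc_mem_nhdsGT_of_mem (Set.mem_Ico.mpr ⟨le_rfl, one_lt_two⟩)
      filter_upwards [hmem] with y hy
      exact ⟨by linarith [hy.1], by linarith [hy.2]⟩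
    have hF' : Filter.Tendsto (fun y : ℝ => F (y - 1)) (nhdsWithin 1 (Ioi 1))
        (nhds (F 0)) := h0.tendsto.comp hsubmap
    have hT : Filter.Tendsto φ (nhdsWithin 1 (Ioi 1)) (nhds 0) := by
      have h := hmul.add hF'
      have hval : (1 * ρ 1 - F 1) + F 0 = 0 := by rw [hρ1, hF1, hF0]; ring
      rw [hval] at h
      have heq : φ = fun y : ℝ => (y * ρ y - F y) + F (y - 1) := by
        funext y; simp only [hφdef]; ring
      rw [heq]; exact h
    have hEv : ∀ᶠ x in nhdsWithin 1 (Ioi 1), φ x = φ b := by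
      filter_upwards [Ioc_mem_nhdsGT_of_mem (Set.mem_Ico.mpr ⟨le_rfl, hb⟩)] with x hx
      exact (hconst x hx).symm
    have hTb : Filter.Tendsto φ (nhdsWithin 1 (Ioi 1)) (nhds (φ b)) := by
      rw [Filter.tendsto_congr' hEv]
      exact tendsto_const_nhds
    exact tendsto_nhds_unique hTb hT
  have key : ∀ β : ℝ, 1 < β → β * ρ β = ∫ t in (β - 1)..β, ρ t := by
    intro β hβ
    have := hφconst β hβ
    rw [hφdef] at this
    simp only [sub_eq_zero] at this
    rw [hsub β hβ.le]
    exact this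
  -- positivity
  have hpos : ∀ β : ℝ, 0 ≤ β → 0 < ρ β := by
    by_contra h
    push_neg at h
    obtain ⟨β₀, hβ₀, hρβ₀⟩ := h
    set S : Set ℝ := {x | 0 ≤ x ∧ ρ x ≤ 0} with hSdef
    have hSne : S.Nonempty := ⟨β₀, hβ₀, hρβ₀⟩
    have hSbdd : BddBelow S := ⟨0, fun x hx => hx.1⟩
    have hSclosed : IsClosed S := by
      have : S = Ici 0 ∩ ρ ⁻¹' (Iic 0) := by
        ext x; simp [hSdef, Set.mem_Ici, Set.mem_Iic]
      rw [this]
      exact hcont.preimage_isClosed_of_isClosed isClosed_Ici isClosed_Iic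
    set c := sInf S with hc
    have hcS : c ∈ S := hSclosed.csInf_mem hSne hSbdd
    have hc0 : 0 ≤ c := hcS.1
    have hc1 : 1 < c := by
      by_contra hle
      push_neg at hle
      have := hinit c ⟨hc0, hle⟩
      linarith [hcS.2]
    have hpos' : ∀ t ∈ Ioo (c - 1) c, 0 < ρ t := by
      intro t ht
      by_contra hle
      push_neg at hle
      have htS : t ∈ S := ⟨by linarith [ht.1], hle⟩
      have := csInf_le hSbdd htS
      linarith [ht.2]
    have hIpos : 0 < ∫ t in (c - 1)..c, ρ t :=
      intervalIntegral.intervalIntegral_pos_of_pos_on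
        (hInt (c - 1) c (by linarith) (by linarith)) hpos' (by linarith)
    have := key c hc1
    nlinarith [hcS.2]
  -- antitone
  have hanti : ∀ a b : ℝ, 0 ≤ a → a ≤ b → ρ b ≤ ρ a := by
    have hIci1 : AntitoneOn ρ (Ici (1:ℝ)) := by
      apply antitoneOn_of_deriv_nonpos (convex_Ici 1)
        (hcont.mono (fun x hx => mem_Ici.mpr (le_trans zero_le_one hx)))
      · intro x hx
        rw [interior_Ici] at hx
        exact ((hode x hx).differentiableAt.differentiableWithinAt)
      · intro x hx
        rw [interior_Ici] at hx
        have hx1 : (1:ℝ) < x := hx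
        rw [(hode x hx).deriv]
        have h1 : 0 ≤ ρ (x - 1) := (hpos (x - 1) (by linarith [hx1])).le
        have h2 : (0:ℝ) < x := by linarith [hx1]
        rw [neg_div]
        exact neg_nonpos.mpr (div_nonneg h1 h2.le)
    intro a b ha hab
    rcases le_total b 1 with hb1 | hb1
    · rw [hinit a ⟨ha, le_trans hab hb1⟩, hinit b ⟨le_trans ha hab, hb1⟩]
    · rcases le_total a 1 with ha1 | ha1
      · rw [hinit a ⟨ha, ha1⟩, ← hρ1]
        exact hIci1 (by simp) hb1 hb1
      · exact hIci1 ha1 (le_trans ha1 hab) hab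
  -- step bound
  have hstep : ∀ β : ℝ, 1 < β → ρ β ≤ ρ (β - 1) / β := by
    intro β hβ
    have hβ0 : (0:ℝ) < β := by linarith
    have hle : (∫ t in (β - 1)..β, ρ t) ≤ ρ (β - 1) := by
      have := intervalIntegral.integral_mono_on (by linarith : β - 1 ≤ β)
        (hInt (β - 1) β (by linarith) (by linarith))
        (intervalIntegrable_const (c := ρ (β - 1)))
        (fun t ht => hanti (β - 1) t (by linarith) ht.1)
      simpa using this
    rw [le_div_iff₀ hβ0, mul_comm]
    rw [key β hβ]
    exact hle
  -- Gamma ≤ 1 on [1,2]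
  have hgam : ∀ x : ℝ, 1 ≤ x → x ≤ 2 → Real.Gamma x ≤ 1 := by
    intro x h1 h2
    have := Real.convexOn_Gamma.2 (Set.mem_Ioi.mpr one_pos)
      (Set.mem_Ioi.mpr two_pos) (by linarith : (0:ℝ) ≤ 2 - x)
      (by linarith : (0:ℝ) ≤ x - 1) (by ring : (2 - x) + (x - 1) = 1)
    simp only [smul_eq_mul] at this
    have hx : (2 - x) * 1 + (x - 1) * 2 = x := by ring
    rw [hx, Real.Gamma_one, Real.Gamma_two] at this
    linarith
  -- induction
  have claim : ∀ n : ℕ, ∀ β : ℝ, 0 ≤ β → β ≤ n + 1 → ρ β ≤ 1 / Real.Gamma (β + 1) := by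
    intro n
    induction n with
    | zero =>
      intro β hβ0 hβ1
      simp only [Nat.cast_zero, zero_add] at hβ1
      have hΓpos : 0 < Real.Gamma (β + 1) := Real.Gamma_pos_of_pos (by linarith)
      rw [hinit β ⟨hβ0, hβ1⟩, le_div_iff₀ hΓpos, one_mul]
      exact hgam (β + 1) (by linarith) (by linarith)
    | succ n ih =>
      intro β hβ0 hβn
      rcases le_or_gt β (n + 1) with h | h
      · exact ih β hβ0 h
      · have h1 : (1:ℝ) < β := by
          have hn : (0:ℝ) ≤ (n:ℝ) := Nat.cast_nonneg n
          have : (1:ℝ) ≤ (n:ℝ) + 1 := by linarith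
          linarith
        have hβ0' : (0:ℝ) < β := by linarith
        have hΓβpos : 0 < Real.Gamma β := Real.Gamma_pos_of_pos hβ0'
        have ihb : ρ (β - 1) ≤ 1 / Real.Gamma β := by
          have := ih (β - 1) (by linarith) (by push_cast; push_cast at hβn; linarith)
          rwa [sub_add_cancel] at this
        calc ρ β ≤ ρ (β - 1) / β := hstep β h1
          _ ≤ (1 / Real.Gamma β) / β := by gcongr
          _ = 1 / Real.Gamma (β + 1) := by
              rw [Real.Gamma_add_one (ne_of_gt hβ0')]
              field_simp
  intro β hβ
  refine claim ⌈β⌉₊ β hβ ?_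
  have := Nat.le_ceil β
  linarith
end

section
/- Let L/K be a finite Galois extension of number fields and let Y ≤ X be real numbers with Y ≥ 2. Then ∑_{N(p) ≤ Y} Ψ(X/N(p), N(p)) ≤ [K:ℚ]·Ψ(X, Y), where the sum runs over nonzero prime ideals p of O_K with N(p) ≤ Y. -/
open NumberField Ideal Filter
open scoped Classical

variable (K : Type) [Field K] [NumberField K]

/-- `Ψ(X, Y)`: the number of nonzero ideals of `O_K` of norm at most `X` all of whose
prime divisors have norm at most `Y` (the `Y`-smooth ideals of norm at most `X`). -/
noncomputable def Psi (X Y : ℝ) : ℕ :=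
  Nat.card {I : Ideal (𝓞 K) // I ≠ 0 ∧ (Ideal.absNorm I : ℝ) ≤ X ∧ (maxNorm K I : ℝ) ≤ Y}

variable (L : Type) [Field L] [NumberField L] [Algebra K L] [FiniteDimensional K L]
  [IsGalois K L]

lemma absNorm_le_maxNorm {I q : Ideal (𝓞 K)} (hI : I ≠ 0) (hq : q.IsPrime) (hd : q ∣ I) :
    Ideal.absNorm q ≤ maxNorm K I := by
  have hIT : I ≠ ⊤ := by
    rintro rfl
    exact hq.ne_top (top_le_iff.mp (Ideal.le_of_dvd hd))
  rw [maxNorm, if_neg hIT]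
  refine le_csSup ⟨Ideal.absNorm I, ?_⟩ ⟨q, ⟨hq, hd⟩, rfl⟩
  rintro x ⟨q', ⟨hq', hd'⟩, rfl⟩
  exact Nat.le_of_dvd (Nat.pos_of_ne_zero (by
    simpa [Ideal.absNorm_eq_zero_iff] using hI)) (map_dvd Ideal.absNorm hd')

lemma maxNorm_le {I : Ideal (𝓞 K)} {c : ℕ} (hc : 1 ≤ c)
    (h : ∀ q : Ideal (𝓞 K), q.IsPrime → q ∣ I → Ideal.absNorm q ≤ c) :
    maxNorm K I ≤ c := by
  rw [maxNorm]
  split_ifs with hIT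
  · exact hc
  · exact csSup_le' (by rintro x ⟨q, ⟨hq, hd⟩, rfl⟩; exact h q hq hd)

lemma two_le_absNorm {p : Ideal (𝓞 K)} (hp : p.IsPrime) (hb : p ≠ ⊥) :
    2 ≤ Ideal.absNorm p := by
  have h0 : Ideal.absNorm p ≠ 0 := by simpa [Ideal.absNorm_eq_zero_iff] using hb
  have h1 : Ideal.absNorm p ≠ 1 := by
    simpa [Ideal.absNorm_eq_one_iff] using hp.ne_top
  omega

lemma absNorm_span_natCast (m : ℕ) :
    Ideal.absNorm (Ideal.span {(m : 𝓞 K)}) = m ^ Module.finrank ℚ K := by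
  have h := Algebra.norm_algebraMap_of_basis (Module.Free.chooseBasis ℤ (𝓞 K)) (m : ℤ)
  rw [Ideal.absNorm_span_singleton, show ((m : 𝓞 K)) = algebraMap ℤ (𝓞 K) (m : ℤ) by simp, h,
    ← Module.finrank_eq_card_chooseBasisIndex, RingOfIntegers.rank]
  simp [Int.natAbs_pow]

lemma card_primes_norm_eq {m : ℕ} (s : Finset (Ideal (𝓞 K)))
    (hs : ∀ p ∈ s, p.IsPrime ∧ p ≠ ⊥ ∧ Ideal.absNorm p = m) :
    s.card ≤ Module.finrank ℚ K := by
  rcases s.eq_empty_or_nonempty with rfl | ⟨p₀, hp₀⟩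
  · simp
  obtain ⟨hp₀p, hp₀b, hp₀n⟩ := hs p₀ hp₀
  have hm : 2 ≤ m := hp₀n ▸ two_le_absNorm K hp₀p hp₀b
  have hdvd : (∏ p ∈ s, p) ∣ Ideal.span {(m : 𝓞 K)} := by
    refine Finset.prod_primes_dvd _ (fun p hp => ?_) (fun p hp => ?_)
    · exact Ideal.prime_of_isPrime (hs p hp).2.1 (hs p hp).1
    · rw [Ideal.dvd_iff_le, Ideal.span_singleton_le_iff_mem]
      have := Ideal.absNorm_mem p
      rwa [(hs p hp).2.2] at this
  have h2 : m ^ s.card ∣ m ^ Module.finrank ℚ K := by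
    have := map_dvd Ideal.absNorm hdvd
    rwa [map_prod, Finset.prod_congr rfl (fun p hp => (hs p hp).2.2), Finset.prod_const,
      absNorm_span_natCast] at this
  exact (Nat.pow_le_pow_iff_right hm).mp
    (Nat.le_of_dvd (Nat.pow_pos (by omega)) h2)

def psiSet (X Y : ℝ) : Set (Ideal (𝓞 K)) :=
  {I | I ≠ 0 ∧ (Ideal.absNorm I : ℝ) ≤ X ∧ (maxNorm K I : ℝ) ≤ Y}

lemma psiSet_finite (X Y : ℝ) : (psiSet K X Y).Finite :=
  (Ideal.finite_setOf_absNorm_le ⌊X⌋₊).subset fun _ ⟨_, h, _⟩ => Nat.le_floor h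

lemma Psi_eq (X Y : ℝ) : Psi K X Y = (psiSet_finite K X Y).toFinset.card := by
  rw [Psi, ← Set.ncard_eq_toFinset_card _ (psiSet_finite K X Y),
    ← Nat.card_coe_set_eq]
  rfl

set_option synthInstance.maxHeartbeats 1000000 in
lemma pair_key (X Y : ℝ) {p I : Ideal (𝓞 K)} (hp : p.IsPrime) (hb : p ≠ ⊥)
    (hpY : (Ideal.absNorm p : ℝ) ≤ Y)
    (hI : I ∈ psiSet K (X / (Ideal.absNorm p : ℝ)) (Ideal.absNorm p : ℝ)) :
    p * I ∈ psiSet K X Y ∧ Ideal.absNorm p = maxNorm K (p * I) := by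
  obtain ⟨hI0, hIX, hIY⟩ := hI
  have hp0 : p ≠ 0 := by rwa [Ideal.zero_eq_bot]
  have hNp2 : 2 ≤ Ideal.absNorm p := two_le_absNorm K hp hb
  have hNppos : (0 : ℝ) < (Ideal.absNorm p : ℝ) := by exact_mod_cast Nat.pos_of_ne_zero (by omega)
  have hmul0 : p * I ≠ 0 := mul_ne_zero hp0 hI0
  have hqle : ∀ q : Ideal (𝓞 K), q.IsPrime → q ∣ p * I →
      Ideal.absNorm q ≤ Ideal.absNorm p := by
    intro q hq hd
    have hq0 : q ≠ ⊥ := by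
      rintro rfl
      exact hmul0 (le_bot_iff.mp (Ideal.le_of_dvd hd))
    rcases (Ideal.prime_of_isPrime hq0 hq).2.2 p I hd with h | h
    · have hmax : p.IsMaximal := hp.isMaximal hb
      rw [hmax.eq_of_le hq.ne_top (Ideal.le_of_dvd h)]
    · exact le_trans (absNorm_le_maxNorm K hI0 hq h) (Nat.cast_le.mp hIY)
  have hmaxle : maxNorm K (p * I) ≤ Ideal.absNorm p := maxNorm_le K (by omega) hqle
  have hlemax : Ideal.absNorm p ≤ maxNorm K (p * I) :=
    absNorm_le_maxNorm K hmul0 hp (dvd_mul_right p I)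
  refine ⟨⟨hmul0, ?_, ?_⟩, le_antisymm hlemax hmaxle⟩
  · rw [_root_.map_mul Ideal.absNorm]
    push_cast
    calc ((Ideal.absNorm p : ℝ)) * (Ideal.absNorm I : ℝ)
        ≤ (Ideal.absNorm p : ℝ) * (X / (Ideal.absNorm p : ℝ)) := by
          exact mul_le_mul_of_nonneg_left hIX (le_of_lt hNppos)
      _ = X := by field_simp
  · exact le_trans (Nat.cast_le.mpr hmaxle) hpY
theorem smooth_count_sum_le (X Y : ℝ) (hY : 2 ≤ Y) (hYX : Y ≤ X) :
    (∑ᶠ p ∈ {p : Ideal (𝓞 K) | p.IsPrime ∧ p ≠ ⊥ ∧ (Ideal.absNorm p : ℝ) ≤ Y},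
        Psi K (X / (Ideal.absNorm p : ℝ)) (Ideal.absNorm p : ℝ)) ≤
      Module.finrank ℚ K * Psi K X Y := by
  have hPfin : {p : Ideal (𝓞 K) | p.IsPrime ∧ p ≠ ⊥ ∧ (Ideal.absNorm p : ℝ) ≤ Y}.Finite :=
    (Ideal.finite_setOf_absNorm_le ⌊Y⌋₊).subset fun p hp => Nat.le_floor hp.2.2
  rw [← hPfin.coe_toFinset, finsum_mem_coe_finset]
  set Pfin := hPfin.toFinset with hPfinDef
  have hPmem : ∀ p ∈ Pfin, p.IsPrime ∧ p ≠ ⊥ ∧ (Ideal.absNorm p : ℝ) ≤ Y := by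
    intro p hp
    exact hPfin.mem_toFinset.mp hp
  set sfun : Ideal (𝓞 K) → Finset (Ideal (𝓞 K)) :=
    fun p => (psiSet_finite K (X / (Ideal.absNorm p : ℝ)) (Ideal.absNorm p : ℝ)).toFinset
    with hsfun
  set t := (psiSet_finite K X Y).toFinset with ht
  set F : (Σ _ : Ideal (𝓞 K), Ideal (𝓞 K)) → Ideal (𝓞 K) := fun x => x.1 * x.2 with hF
  have key : ∀ x ∈ Pfin.sigma sfun,
      F x ∈ t ∧ Ideal.absNorm x.1 = maxNorm K (F x) := by
    rintro ⟨p, I⟩ hx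
    rw [Finset.mem_sigma] at hx
    obtain ⟨hpP, hIs⟩ := hx
    obtain ⟨hp, hb, hpY⟩ := hPmem p hpP
    have hI : I ∈ psiSet K (X / (Ideal.absNorm p : ℝ)) (Ideal.absNorm p : ℝ) :=
      (psiSet_finite K _ _).mem_toFinset.mp hIs
    have := pair_key K X Y hp hb hpY hI
    exact ⟨(psiSet_finite K X Y).mem_toFinset.mpr this.1, this.2⟩
  calc ∑ p ∈ Pfin, Psi K (X / (Ideal.absNorm p : ℝ)) (Ideal.absNorm p : ℝ)
      = ∑ p ∈ Pfin, (sfun p).card := Finset.sum_congr rfl (fun p _ => Psi_eq K _ _)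
    _ = (Pfin.sigma sfun).card := (Finset.card_sigma _ _).symm
    _ ≤ Module.finrank ℚ K * t.card := ?_
    _ = Module.finrank ℚ K * Psi K X Y := by rw [Psi_eq K X Y]
  refine Finset.card_le_mul_card_image_of_maps_to (f := F)
    (fun x hx => (key x hx).1) _ (fun J hJ => ?_)
  refine le_trans (Finset.card_le_card_of_injOn Sigma.fst ?_ ?_)
    (card_primes_norm_eq K (m := maxNorm K J) (Pfin.filter fun p => Ideal.absNorm p = maxNorm K J) ?_)
  · rintro x hx
    rw [Finset.mem_coe, Finset.mem_filter] at hx ⊢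
    obtain ⟨hxs, hxJ⟩ := hx
    exact ⟨(Finset.mem_sigma.mp hxs).1, by rw [← hxJ]; exact (key x hxs).2⟩
  · rintro ⟨p, I⟩ hx ⟨p', I'⟩ hy hfst
    simp only [Finset.coe_filter, Set.mem_setOf_eq] at hx hy
    obtain ⟨hxs, hxJ⟩ := hx
    obtain ⟨hys, hyJ⟩ := hy
    cases hfst
    have hp0 : p ≠ 0 := by
      have := (hPmem p (Finset.mem_sigma.mp hxs).1).2.1
      rwa [Ideal.zero_eq_bot]
    have : I = I' := mul_left_cancel₀ hp0 (by rw [show p * I = J from hxJ, show p * I' = J from hyJ])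
    rw [this]
  · intro p hp
    rw [Finset.mem_filter] at hp
    obtain ⟨hpP, hpn⟩ := hp
    exact ⟨(hPmem p hpP).1, (hPmem p hpP).2.1, hpn⟩
end
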